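/- Let N : ℕ be even with 0 < N, let c₁ : ℝ with k := 2·N·c₁ ∈ ℤ, let P : ℕ, and for each p ∈ {1,…,P} let h_p ∈ ℂ, f_p ∈ ℤ, ℓ_p ∈ {0,…,N−1}. Suppose the location indices loc_p := (f_p + k·ℓ_p) mod N are pairwise distinct. Define the effective AFDM channel G = F_N·Λ_{c₁}·(Σ_{p=1}^{P} h_p·W^{f_p}·L^{ℓ_p})·Λ_{c₁}ᴴ·F_Nᴴ. Then for every row index m ∈ {0,…,N−1} and every p, the entry of G at position (m, m') with m' ≡ m + loc_p (mod N) has modulus |h_p|, and all entries of row m at columns m' with (m' − m) mod N ∉ {loc_1,…,loc_P} are zero; in particular each row of G has at most P nonzero entries. -/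

import Mathlib

open Matrix Complex

/-- The `N`-point DFT matrix `F_N` with entries `(1/√N)·exp(-2πi·m·n/N)`. -/
noncomputable def dftMatrix (N : ℕ) : Matrix (Fin N) (Fin N) ℂ :=
  fun m n => (1 / Real.sqrt N : ℂ) *
    Complex.exp (-2 * Real.pi * Complex.I * (m : ℕ) * (n : ℕ) / N)

/-- The diagonal chirp matrix `Λ_c` with diagonal entries `exp(-2πi·c·n²)`. -/
noncomputable def chirpMatrix (N : ℕ) (c : ℝ) : Matrix (Fin N) (Fin N) ℂ :=
  Matrix.diagonal fun n => Complex.exp (-2 * Real.pi * Complex.I * c * (n : ℕ) ^ 2)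

/-- The diagonal Doppler matrix `W^f` with diagonal entries `exp(-2πi·f·n/N)`. -/
noncomputable def dopplerMatrix (N : ℕ) (f : ℤ) : Matrix (Fin N) (Fin N) ℂ :=
  Matrix.diagonal fun n => Complex.exp (-2 * Real.pi * Complex.I * (f : ℂ) * (n : ℕ) / N)

/-- The cyclic delay matrix `L^ℓ` with `[L^ℓ]_{n,n'} = 1` iff `n' ≡ n − ℓ (mod N)`. -/
def delayMatrix (N : ℕ) (ℓ : ℕ) : Matrix (Fin N) (Fin N) ℂ :=
  fun n n' => if Int.ModEq (N : ℤ) (n' : ℤ) ((n : ℤ) - (ℓ : ℤ)) then 1 else 0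


noncomputable def eC (r : ℝ) : ℂ := Complex.exp (2 * Real.pi * Complex.I * r)

lemma eC_add (r s : ℝ) : eC (r + s) = eC r * eC s := by
  simp only [eC, ← Complex.exp_add]; congr 1; push_cast; ring

lemma eC_int (j : ℤ) : eC j = 1 := by
  simpa [eC, mul_comm, mul_assoc, mul_left_comm] using Complex.exp_int_mul_two_pi_mul_I j

lemma eC_add_int (r : ℝ) (j : ℤ) : eC (r + j) = eC r := by
  rw [eC_add, eC_int, mul_one]

lemma abs_eC (r : ℝ) : ‖eC r‖ = 1 := by
  simp [eC]
  rw [show 2 * ↑Real.pi * Complex.I * ↑r = (2 * Real.pi * r : ℝ) * Complex.I by push_cast; ring]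
  exact Complex.norm_exp_ofReal_mul_I _

lemma conj_eC (r : ℝ) : (starRingEnd ℂ) (eC r) = eC (-r) := by
  rw [eC, ← Complex.exp_conj]
  congr 1
  simp only [_root_.map_mul, Complex.conj_I, Complex.conj_ofReal, map_ofNat]
  push_cast
  ring

lemma eC_nat_mul (r : ℝ) (n : ℕ) : eC (n * r) = (eC r) ^ n := by
  rw [eC, eC, ← Complex.exp_nat_mul]; congr 1; push_cast; ring

lemma sum_eC_geom (N : ℕ) (hN : 0 < N) (a : ℤ) :
    ∑ n : Fin N, eC ((n : ℕ) * ((a : ℝ) / N)) = if (N : ℤ) ∣ a then (N : ℂ) else 0 := by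
  have hNR : (N : ℝ) ≠ 0 := Nat.cast_ne_zero.mpr hN.ne'
  simp only [eC_nat_mul]
  set ζ := eC ((a : ℝ) / N) with hζdef
  rw [Fin.sum_univ_eq_sum_range (fun n => ζ ^ n)]
  by_cases hd : (N : ℤ) ∣ a
  · obtain ⟨b, hb⟩ := hd
    have h1 : ζ = 1 := by
      rw [hζdef, show ((a : ℝ) / N) = ((b : ℤ) : ℝ) by rw [hb]; push_cast; field_simp, eC_int]
    simp [h1, hb]
  · have hne : ζ ≠ 1 := by
      intro hone
      rw [hζdef, eC, Complex.exp_eq_one_iff] at hone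
      obtain ⟨j, hj⟩ := hone
      apply hd
      have h2 : (2 * (Real.pi : ℂ) * Complex.I) ≠ 0 := by
        simp [Real.pi_ne_zero, Complex.I_ne_zero]
      have h5 : (((a : ℝ) / N : ℝ) : ℂ) = (j : ℂ) := by
        refine mul_left_cancel₀ h2 ?_
        rw [hj]; ring
      have h6 : (a : ℝ) / N = (j : ℝ) := by exact_mod_cast h5
      refine ⟨j, ?_⟩
      have h7 : (a : ℝ) = N * j := by rw [div_eq_iff hNR] at h6; rw [h6]; ring
      exact_mod_cast h7
    rw [geom_sum_eq hne]
    have hNpow : ζ ^ N = 1 := by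
      rw [hζdef, ← eC_nat_mul, show (N : ℝ) * ((a : ℝ) / N) = ((a : ℤ) : ℝ) by field_simp, eC_int]
    simp [hNpow, hd]


lemma emod_modEq (a n : ℤ) : a % n ≡ a [ZMOD n] := Int.emod_emod_of_dvd a dvd_rfl

lemma fin_sub_int (N : ℕ) (n l : Fin N) :
    ((n - l : Fin N) : ℤ) ≡ (n : ℤ) - (l : ℤ) [ZMOD (N : ℤ)] := by
  have h1 : ((n - l : Fin N) : ℕ) = ((N - (l : ℕ)) + (n : ℕ)) % N := by
    rw [Fin.sub_def]
  have h2 : ((n - l : Fin N) : ℤ) = ((N : ℤ) - (l : ℤ) + (n : ℤ)) % N := by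
    rw [h1]; push_cast [Nat.cast_sub l.isLt.le]; ring_nf
  rw [h2]
  calc ((N : ℤ) - l + n) % N ≡ (N : ℤ) - l + n [ZMOD (N:ℤ)] := emod_modEq _ _
    _ ≡ (n : ℤ) - l [ZMOD (N:ℤ)] := Int.ModEq.symm (Int.modEq_iff_dvd.mpr ⟨1, by ring⟩)

lemma fin_eq_of_modEq {N : ℕ} (a b : Fin N) (h : (a : ℤ) ≡ (b : ℤ) [ZMOD (N : ℤ)]) :
    a = b := by
  have h0 : 0 < N := a.pos
  have ha : (a : ℤ) % N = a := Int.emod_eq_of_lt (by positivity) (by exact_mod_cast a.isLt)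
  have hb : (b : ℤ) % N = b := Int.emod_eq_of_lt (by positivity) (by exact_mod_cast b.isLt)
  have := h
  unfold Int.ModEq at this
  rw [ha, hb] at this
  exact Fin.ext (by exact_mod_cast this)

lemma delay_apply (N : ℕ) (l n n' : Fin N) :
    delayMatrix N (l : ℕ) n n' = if n' = n - l then 1 else 0 := by
  unfold delayMatrix
  have hiff : (Int.ModEq (N : ℤ) (n' : ℤ) ((n : ℤ) - (l : ℤ))) ↔ n' = n - l := by
    constructor
    · intro hmod
      exact fin_eq_of_modEq _ _ (hmod.trans (fin_sub_int N n l).symm)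
    · rintro rfl
      exact fin_sub_int N n l
  simp [hiff]

lemma delay_apply' (N : ℕ) (lp : ℕ) (hlp : lp < N) (n n' : Fin N) :
    delayMatrix N lp n n' = if n' = n - ⟨lp, hlp⟩ then 1 else 0 :=
  delay_apply N ⟨lp, hlp⟩ n n'

lemma sum_ite_inner {α : Type*} [Fintype α] [DecidableEq α] (b : α) (p : α → Prop)
    [DecidablePred p] (f : α → ℂ) :
    ∑ x, (if p x then (if b = x then f x else 0) else 0) = if p b then f b else 0 := by
  have h : ∀ x, (if p x then (if b = x then f x else 0) else 0)
      = if b = x then (if p x then f x else 0) else 0 := by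
    intro x; by_cases h1 : p x <;> by_cases h2 : b = x <;> simp [h1, h2]
  simp only [h, Finset.sum_ite_eq, Finset.mem_univ, if_true]

lemma eC_eq_int_diff (r s : ℝ) (j : ℤ) (h : r = s + j) : eC r = eC s := by
  rw [h, eC_add_int]

lemma star_eC (r : ℝ) : star (eC r) = eC (-r) := conj_eC r

lemma fin_add_int (N : ℕ) (n l : Fin N) :
    ((n + l : Fin N) : ℤ) ≡ (n : ℤ) + (l : ℤ) [ZMOD (N : ℤ)] := by
  have h1 : ((n + l : Fin N) : ℕ) = ((n : ℕ) + (l : ℕ)) % N := by rw [Fin.add_def]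
  have h2 : ((n + l : Fin N) : ℤ) = ((n : ℤ) + (l : ℤ)) % N := by rw [h1]; push_cast; ring_nf
  rw [h2]
  exact emod_modEq _ _

lemma dft_eC (N : ℕ) (m n : Fin N) :
    dftMatrix N m n = (1 / (Real.sqrt N : ℂ)) * eC (-(((m : ℕ) : ℝ) * ((n : ℕ) : ℝ) / N)) := by
  simp only [dftMatrix, eC]
  congr 2
  push_cast
  ring

lemma star_dft_eC (N : ℕ) (m n : Fin N) :
    star (dftMatrix N m n) = (1 / (Real.sqrt N : ℂ)) * eC (((m : ℕ) : ℝ) * ((n : ℕ) : ℝ) / N) := by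
  rw [dft_eC, star_mul', star_eC, neg_neg]
  congr 1
  simp [Complex.star_def, Complex.conj_ofReal, Complex.ofReal_div]

lemma exp_chirp_eC (c₁ : ℝ) (v : ℕ) :
    Complex.exp (-2 * Real.pi * Complex.I * c₁ * (v : ℂ) ^ 2) = eC (-(c₁ * (v : ℝ) ^ 2)) := by
  rw [eC]; congr 1; push_cast; ring

lemma star_exp_chirp_eC (c₁ : ℝ) (v : ℕ) :
    star (Complex.exp (-2 * Real.pi * Complex.I * c₁ * (v : ℂ) ^ 2)) = eC (c₁ * (v : ℝ) ^ 2) := by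
  rw [exp_chirp_eC, star_eC, neg_neg]

lemma exp_doppler_eC (N : ℕ) (fp : ℤ) (v : ℕ) :
    Complex.exp (-2 * Real.pi * Complex.I * (fp : ℂ) * (v : ℂ) / N) = eC (-((fp : ℝ) * (v : ℝ) / N)) := by
  rw [eC]; congr 1; push_cast; ring

lemma single_entry (N : ℕ) (hN : 0 < N) (hNeven : Even N) (c₁ : ℝ) (k : ℤ)
    (hk : (2 * N * c₁ : ℝ) = k) (fp : ℤ) (lp : ℕ) (hlp : lp < N) (m m' : Fin N) :
    (dftMatrix N * chirpMatrix N c₁ * (dopplerMatrix N fp * delayMatrix N lp) *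
      (chirpMatrix N c₁)ᴴ * (dftMatrix N)ᴴ) m m' =
    if ((N : ℤ) ∣ ((m' : ℤ) - (m : ℤ) - (fp + k * lp))) then
      eC (-((((m : ℕ) : ℝ) + (fp : ℝ)) * lp / N) - c₁ * lp ^ 2) else 0 := by
  haveI : NeZero N := ⟨hN.ne'⟩
  obtain ⟨M, hM⟩ := hNeven
  have hNR : (N : ℝ) ≠ 0 := Nat.cast_ne_zero.mpr hN.ne'
  have hc₁ : c₁ = (k : ℝ) / (2 * N) := by
    field_simp
    linarith [hk]
  set l : Fin N := ⟨lp, hlp⟩ with hldef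
  set a : ℤ := (m' : ℤ) - (m : ℤ) - (fp + k * lp) with hadef
  set C : ℝ := -((((m : ℕ) : ℝ) + (fp : ℝ)) * lp / N) - c₁ * lp ^ 2 with hCdef
  -- Step 1 : expand the matrix product entrywise
  simp only [Matrix.mul_apply, Matrix.conjTranspose_apply, Matrix.diagonal_apply,
    chirpMatrix, dopplerMatrix, delay_apply' N lp hlp, ite_mul, mul_ite, zero_mul, mul_zero,
    apply_ite (star : ℂ → ℂ), star_zero, star_one, mul_one,
    Finset.sum_ite_eq, Finset.sum_ite_eq', Finset.mem_univ, if_true]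
  simp only [sum_ite_inner, eq_sub_iff_add_eq, mul_ite, mul_zero, ite_mul, zero_mul,
    Finset.sum_ite_eq, Finset.mem_univ, if_true]
  simp only [Finset.sum_ite_eq', Finset.mem_univ, if_true]
  -- Step 2 : rewrite each summand in eC form
  have key : ∀ x : Fin N,
      dftMatrix N m (x + l) * Complex.exp (-2 * Real.pi * Complex.I * c₁ * (((x + l : Fin N) : ℕ) : ℂ) ^ 2) *
          Complex.exp (-2 * Real.pi * Complex.I * (fp : ℂ) * (((x + l : Fin N) : ℕ) : ℂ) / N) *
          star (Complex.exp (-2 * Real.pi * Complex.I * c₁ * ((x : ℕ) : ℂ) ^ 2)) *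
          star (dftMatrix N m' x) =
      (1 / (N : ℂ)) * (eC C * eC (((x : ℕ) : ℝ) * ((a : ℝ) / N))) := by
    intro x
    -- the integer shift t
    obtain ⟨t, ht⟩ : ∃ t : ℤ, (((x + l : Fin N) : ℕ) : ℤ) = (x : ℤ) + lp + N * t := by
      have := (fin_add_int N x l).symm
      rw [Int.modEq_iff_dvd] at this
      obtain ⟨t, ht⟩ := this
      exact ⟨t, by linarith [ht]⟩
    have hqR : ((((x + l : Fin N) : ℕ) : ℝ)) = ((x : ℕ) : ℝ) + lp + N * t := by
      exact_mod_cast congrArg (fun z : ℤ => (z : ℝ)) ht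
    rw [dft_eC, star_dft_eC, exp_chirp_eC, star_exp_chirp_eC, exp_doppler_eC]
    rw [show ∀ (s : ℂ) (A1 A2 A3 A4 A5 : ℂ), (s * A1) * A2 * A3 * A4 * (s * A5)
        = (s * s) * (A1 * A2 * A3 * A4 * A5) from fun _ _ _ _ _ _ => by ring]
    rw [← eC_add, ← eC_add, ← eC_add, ← eC_add]
    have hs : (1 / (Real.sqrt N : ℂ)) * (1 / (Real.sqrt N : ℂ)) = 1 / (N : ℂ) := by
      rw [div_mul_div_comm, one_mul]
      congr 1
      rw [← Complex.ofReal_mul, Real.mul_self_sqrt (Nat.cast_nonneg N)]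
      norm_cast
    rw [hs]
    congr 1
    -- now the pure phase identity
    set q : ℝ := (((x + l : Fin N) : ℕ) : ℝ)
    set j : ℤ := -((m : ℤ) * t) - fp * t - t * k * ((x : ℤ) + lp) - t * t * ((M : ℤ) * k) with hjdef
    have harg : -(((m : ℕ) : ℝ) * q / N) + -(c₁ * q ^ 2) + -((fp : ℝ) * q / N)
        + c₁ * ((x : ℕ) : ℝ) ^ 2 + ((m' : ℕ) : ℝ) * ((x : ℕ) : ℝ) / N
        = (C + ((x : ℕ) : ℝ) * ((a : ℝ) / N)) + (j : ℤ) := by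
      have hMR : (N : ℝ) = (M : ℝ) + (M : ℝ) := by exact_mod_cast congrArg (fun z : ℕ => (z : ℝ)) hM
      have hM0 : (M : ℝ) ≠ 0 := by
        intro h0
        rw [h0] at hMR; simp at hMR; exact hNR (by exact_mod_cast hMR)
      rw [hqR, hCdef, hadef, hjdef, hc₁, hMR]
      push_cast
      field_simp
      ring
    rw [harg, eC_add_int, eC_add]
  simp only [← hldef, key]
  rw [← Finset.mul_sum, ← Finset.mul_sum, sum_eC_geom N hN a]
  by_cases hd : (N : ℤ) ∣ a
  · rw [if_pos hd, if_pos hd]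
    field_simp [(Nat.cast_ne_zero.mpr hN.ne' : (N : ℂ) ≠ 0)]
  · rw [if_neg hd, if_neg hd, mul_zero, mul_zero]

def finOfInt (N : ℕ) (hN : 0 < N) (x : ℤ) : Fin N :=
  ⟨(x % N).toNat, by
    have h1 : 0 ≤ x % N := Int.emod_nonneg x (by exact_mod_cast hN.ne')
    have h2 : x % N < N := Int.emod_lt_of_pos x (by exact_mod_cast hN)
    omega⟩

lemma finOfInt_int (N : ℕ) (hN : 0 < N) (x : ℤ) :
    ((finOfInt N hN x : Fin N) : ℤ) = x % N := by
  simp only [finOfInt]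
  exact Int.toNat_of_nonneg (Int.emod_nonneg x (by exact_mod_cast hN.ne'))

lemma eq_finOfInt_of_modEq {N : ℕ} (hN : 0 < N) (m' : Fin N) (x : ℤ)
    (h : (m' : ℤ) ≡ x [ZMOD (N : ℤ)]) : m' = finOfInt N hN x := by
  apply fin_eq_of_modEq
  rw [finOfInt_int]
  exact h.trans (emod_modEq x N).symm

/-- **Multipath AFDM effective channel structure**: for even `N`, `k = 2Nc₁ ∈ ℤ`, and a
`P`-path doubly-dispersive channel with pairwise distinct location indices
`loc_p = (f_p + k·ℓ_p) mod N`, row `m` of the effective channel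
`G = F_N·Λ_{c₁}·(Σ_p h_p·W^{f_p}·L^{ℓ_p})·Λ_{c₁}ᴴ·F_Nᴴ` has an entry of modulus `|h_p|`
at each column `m' ≡ m + loc_p (mod N)`, zero entries at all other columns, and hence
at most `P` nonzero entries. -/
theorem afdm_multipath_effective_channel (N : ℕ) (hN : 0 < N) (hNeven : Even N)
    (c₁ : ℝ) (k : ℤ) (hk : (2 * N * c₁ : ℝ) = k) (P : ℕ)
    (h : Fin P → ℂ) (f : Fin P → ℤ) (ℓ : Fin P → ℕ) (hℓ : ∀ p, ℓ p < N)
    (loc : Fin P → ℤ) (hloc : ∀ p, loc p = (f p + k * (ℓ p : ℤ)) % (N : ℤ))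
    (hdistinct : Function.Injective loc) :
    let G : Matrix (Fin N) (Fin N) ℂ :=
      dftMatrix N * chirpMatrix N c₁ *
        (∑ p, h p • (dopplerMatrix N (f p) * delayMatrix N (ℓ p))) *
        (chirpMatrix N c₁)ᴴ * (dftMatrix N)ᴴ
    (∀ (m m' : Fin N) (p : Fin P),
      Int.ModEq (N : ℤ) (m' : ℤ) ((m : ℤ) + loc p) →
        ‖G m m'‖ = ‖h p‖) ∧
    (∀ m m' : Fin N,
      (∀ p : Fin P, ¬ Int.ModEq (N : ℤ) ((m' : ℤ) - (m : ℤ)) (loc p)) → G m m' = 0) ∧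
    (∀ m : Fin N, (Finset.univ.filter fun m' : Fin N => G m m' ≠ 0).card ≤ P) := by
  intro G
  have hGdef : G = dftMatrix N * chirpMatrix N c₁ *
      (∑ p, h p • (dopplerMatrix N (f p) * delayMatrix N (ℓ p))) *
      (chirpMatrix N c₁)ᴴ * (dftMatrix N)ᴴ := rfl
  have hNZ : ((N : ℤ)) ≠ 0 := by exact_mod_cast hN.ne'
  have h0N : (0 : ℤ) < N := by exact_mod_cast hN
  -- entrywise formula
  have hG : ∀ m m' : Fin N, G m m' = ∑ p, h p *
      (if ((N : ℤ) ∣ ((m' : ℤ) - (m : ℤ) - (f p + k * ℓ p))) then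
        eC (-((((m : ℕ) : ℝ) + (f p : ℝ)) * (ℓ p) / N) - c₁ * (ℓ p) ^ 2) else 0) := by
    intro m m'
    have hmat : G = ∑ p, h p • (dftMatrix N * chirpMatrix N c₁ *
        (dopplerMatrix N (f p) * delayMatrix N (ℓ p)) * (chirpMatrix N c₁)ᴴ * (dftMatrix N)ᴴ) := by
      rw [hGdef]
      simp only [Matrix.mul_sum, Matrix.sum_mul, Matrix.mul_smul, Matrix.smul_mul]
    rw [hmat, Matrix.sum_apply]
    refine Finset.sum_congr rfl fun p _ => ?_
    rw [Matrix.smul_apply, smul_eq_mul,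
      single_entry N hN hNeven c₁ k hk (f p) (ℓ p) (hℓ p) m m']
  -- divisibility bridge
  have hdvd : ∀ (p : Fin P) (x : ℤ),
      ((N : ℤ) ∣ (x - (f p + k * ℓ p))) ↔ x ≡ loc p [ZMOD (N : ℤ)] := by
    intro p x
    have h1 : loc p ≡ f p + k * ℓ p [ZMOD (N : ℤ)] := by
      rw [hloc p]; exact emod_modEq _ _
    rw [← Int.modEq_iff_dvd]
    constructor
    · intro h2; exact (h1.trans h2).symm
    · intro h2; exact ((h2.trans h1).symm : _)
  have hloc_range : ∀ p, 0 ≤ loc p ∧ loc p < N := fun p => by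
    rw [hloc p]
    exact ⟨Int.emod_nonneg _ hNZ, Int.emod_lt_of_pos _ h0N⟩
  have hloc_inj : ∀ p q, loc p ≡ loc q [ZMOD (N : ℤ)] → p = q := by
    intro p q hpq
    apply hdistinct
    have h2 := hpq
    unfold Int.ModEq at h2
    rwa [Int.emod_eq_of_lt (hloc_range p).1 (hloc_range p).2,
      Int.emod_eq_of_lt (hloc_range q).1 (hloc_range q).2] at h2
  refine ⟨?_, ?_, ?_⟩
  · -- part (a)
    intro m m' p hmod
    have hm : ((m' : ℤ) - (m : ℤ)) ≡ loc p [ZMOD (N : ℤ)] := by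
      have h2 := Int.ModEq.sub_right (m : ℤ) hmod
      simpa [add_sub_cancel_left] using h2
    rw [hG m m', Finset.sum_eq_single p]
    · rw [if_pos ((hdvd p _).mpr hm), norm_mul, abs_eC, mul_one]
    · intro q _ hqp
      rw [if_neg, mul_zero]
      intro hdv
      exact hqp (hloc_inj q p (((hdvd q _).mp hdv).symm.trans hm))
    · intro hp; exact absurd (Finset.mem_univ p) hp
  · -- part (b)
    intro m m' hnone
    rw [hG m m']
    apply Finset.sum_eq_zero
    intro p _
    rw [if_neg, mul_zero]
    intro hdv
    exact hnone p ((hdvd p _).mp hdv)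
  · -- part (c)
    intro m
    classical
    have hsub : (Finset.univ.filter fun m' : Fin N => G m m' ≠ 0) ⊆
        Finset.image (fun p => finOfInt N hN ((m : ℤ) + loc p)) Finset.univ := by
      intro m' hm'
      rw [Finset.mem_filter] at hm'
      obtain ⟨-, hne⟩ := hm'
      by_contra hnotmem
      apply hne
      rw [hG m m']
      apply Finset.sum_eq_zero
      intro p _
      rw [if_neg, mul_zero]
      intro hdv
      have hmp : ((m' : ℤ) - (m : ℤ)) ≡ loc p [ZMOD (N : ℤ)] := (hdvd p _).mp hdv
      have hm'' : (m' : ℤ) ≡ (m : ℤ) + loc p [ZMOD (N : ℤ)] := by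
        have h2 := Int.ModEq.add_right (m : ℤ) hmp
        simpa [sub_add_cancel, add_comm] using h2
      exact hnotmem (Finset.mem_image.mpr ⟨p, Finset.mem_univ p,
        (eq_finOfInt_of_modEq hN m' _ hm'').symm⟩)
    calc (Finset.univ.filter fun m' : Fin N => G m m' ≠ 0).card
        ≤ (Finset.image (fun p => finOfInt N hN ((m : ℤ) + loc p)) Finset.univ).card :=
          Finset.card_le_card hsub
      _ ≤ Finset.univ.card := Finset.card_image_le
      _ = P := by simp
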